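/- arXiv:2304.03080 — 2 statements merged into one kernel-verified Lean document; each statement's English description precedes it below -/
import Mathlib

section
/- Let L ≥ 1 be a natural number, Q an L×L generator matrix, and F a cumulative distribution function on [0,∞) with F(0)=0 admitting a continuous density f ≥ 0, F^c := 1−F with F^c(x) > 0 for all x ≥ 0, and hazard rate μ(a) := f(a)/F^c(a). Let i₀ : [0,∞) → ℝ^L and b : [0,∞) → ℝ^L be continuous row-vector-valued functions, and define i : [0,∞)×[0,∞) → ℝ^L by i(t,𝔞) = (F^c(𝔞)/F^c(𝔞−t))·i₀(𝔞−t)·exp(tQ) if 0 ≤ t ≤ 𝔞, and i(t,𝔞) = F^c(𝔞)·b(t−𝔞)·exp(𝔞Q) if 0 ≤ 𝔞 < t. Then for every (t,𝔞) with t > 0, 𝔞 > 0 and t ≠ 𝔞, the directional derivative of i at (t,𝔞) in the direction (1,1) exists and equals −μ(𝔞)·i(t,𝔞) + i(t,𝔞)·Q. -/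
open Matrix intervalIntegral Set

/-- `Q` is the generator matrix of a continuous-time Markov chain on `Fin L`:
nonnegative off-diagonal entries and zero row sums. -/
def IsGeneratorMatrix {L : ℕ} (Q : Matrix (Fin L) (Fin L) ℝ) : Prop :=
  (∀ i j, i ≠ j → 0 ≤ Q i j) ∧ ∀ i, ∑ j, Q i j = 0

/-- The complementary c.d.f. `F^c = 1 - F` associated with the density `f` on `[0,∞)`,
where `F(x) = ∫₀ˣ f(u) du`. -/
noncomputable def survival (f : ℝ → ℝ) (x : ℝ) : ℝ := 1 - ∫ u in (0:ℝ)..x, f u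

attribute [local instance] Matrix.linftyOpNormedRing Matrix.linftyOpNormedAlgebra

/-- `M ↦ v ᵥ* M` as a continuous linear map. -/
noncomputable def vmCLM (L : ℕ) (v : Fin L → ℝ) :
    Matrix (Fin L) (Fin L) ℝ →L[ℝ] (Fin L → ℝ) :=
  LinearMap.toContinuousLinearMap
    { toFun := fun M => v ᵥ* M
      map_add' := fun A B => Matrix.vecMul_add A B v
      map_smul' := fun c A => by
        ext j; simp [Matrix.vecMul, dotProduct, Finset.mul_sum, mul_assoc, mul_left_comm] }

lemma vmCLM_apply (L : ℕ) (v : Fin L → ℝ) (M : Matrix (Fin L) (Fin L) ℝ) :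
    vmCLM L v M = v ᵥ* M := rfl

lemma survival_hasDerivAt (f : ℝ → ℝ) (hf : Continuous f) (x : ℝ) :
    HasDerivAt (survival f) (-f x) x := by
  have h1 : HasDerivAt (fun u : ℝ => ∫ s in (0:ℝ)..u, f s) (f x) x :=
    intervalIntegral.integral_hasDerivAt_right (hf.intervalIntegrable 0 x)
      (hf.stronglyMeasurableAtFilter _ _) hf.continuousAt
  exact ((hasDerivAt_const x (1:ℝ)).sub h1).congr_deriv (by simp)

lemma vecMul_exp_hasDerivAt (L : ℕ) (Q : Matrix (Fin L) (Fin L) ℝ) (v : Fin L → ℝ) (s : ℝ) :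
    HasDerivAt (fun h : ℝ => v ᵥ* NormedSpace.exp ((s + h) • Q))
      (v ᵥ* (NormedSpace.exp (s • Q) * Q)) 0 := by
  have h1 : HasDerivAt (fun u : ℝ => NormedSpace.exp (u • Q))
      (NormedSpace.exp (s • Q) * Q) s := hasDerivAt_exp_smul_const Q s
  have h2 : HasDerivAt (fun h : ℝ => s + h) 1 0 := (hasDerivAt_id 0).const_add s
  have h1' : HasDerivAt (fun u : ℝ => NormedSpace.exp (u • Q))
      (NormedSpace.exp (s • Q) * Q) ((fun h : ℝ => s + h) 0) := by simpa using h1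
  have h3 : HasDerivAt (fun h : ℝ => NormedSpace.exp ((s + h) • Q))
      (NormedSpace.exp (s • Q) * Q) 0 := by
    exact (h1'.scomp 0 h2).congr_deriv (by simp)
  exact ((vmCLM L v).hasFDerivAt.comp_hasDerivAt 0 h3)

/-- **Theorem 3.1, existence part.** The function defined by formulas (3.4)–(3.5) solves
the transport PDE `∂_t i + ∂_𝔞 i = -μ(𝔞) i + i Q` away from the diagonal `t = 𝔞`. -/
theorem transport_pde_existence
    (L : ℕ) (hL : 1 ≤ L) (Q : Matrix (Fin L) (Fin L) ℝ) (hQ : IsGeneratorMatrix Q)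
    (f : ℝ → ℝ) (hf_cont : Continuous f) (hf_nonneg : ∀ x, 0 ≤ f x)
    (hf_prob : ∫ u in Ioi (0:ℝ), f u = 1)
    (hFc_pos : ∀ x ≥ (0:ℝ), 0 < survival f x)
    (i₀ b : ℝ → Fin L → ℝ)
    (hi₀ : ContinuousOn i₀ (Ici 0)) (hb : ContinuousOn b (Ici 0))
    (i : ℝ → ℝ → Fin L → ℝ)
    (hi_le : ∀ t 𝔞 : ℝ, 0 ≤ t → t ≤ 𝔞 →
      i t 𝔞 = (survival f 𝔞 / survival f (𝔞 - t)) •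
        ((i₀ (𝔞 - t)) ᵥ* NormedSpace.exp (t • Q)))
    (hi_gt : ∀ t 𝔞 : ℝ, 0 ≤ 𝔞 → 𝔞 < t →
      i t 𝔞 = survival f 𝔞 • ((b (t - 𝔞)) ᵥ* NormedSpace.exp (𝔞 • Q))) :
    ∀ t > (0:ℝ), ∀ 𝔞 > (0:ℝ), t ≠ 𝔞 →
      HasDerivAt (fun h : ℝ => i (t + h) (𝔞 + h))
        (-(f 𝔞 / survival f 𝔞) • i t 𝔞 + (i t 𝔞) ᵥ* Q) 0 := by
  intro t ht 𝔞 h𝔞 hne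
  have hFa := hFc_pos 𝔞 h𝔞.le
  have hSa : HasDerivAt (fun h : ℝ => survival f (𝔞 + h)) (-f 𝔞) 0 := by
    have hS : HasDerivAt (survival f) (-f 𝔞) ((fun h : ℝ => 𝔞 + h) 0) := by
      simpa using survival_hasDerivAt f hf_cont 𝔞
    exact (hS.scomp 0 ((hasDerivAt_id 0).const_add 𝔞)).congr_deriv (by simp)
  rcases lt_or_gt_of_ne hne with hlt | hgt
  · -- t < 𝔞
    set v := i₀ (𝔞 - t) with hv
    have hFat := hFc_pos (𝔞 - t) (by linarith)
    have hkey : HasDerivAt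
        (fun h : ℝ => (survival f (𝔞 + h) / survival f (𝔞 - t)) •
          (v ᵥ* NormedSpace.exp ((t + h) • Q)))
        ((survival f 𝔞 / survival f (𝔞 - t)) • (v ᵥ* (NormedSpace.exp (t • Q) * Q))
          + (-f 𝔞 / survival f (𝔞 - t)) • (v ᵥ* NormedSpace.exp (t • Q))) 0 := by
      have hc : HasDerivAt (fun h : ℝ => survival f (𝔞 + h) / survival f (𝔞 - t))
          (-f 𝔞 / survival f (𝔞 - t)) 0 := hSa.div_const _
      exact (hc.smul (vecMul_exp_hasDerivAt L Q v t)).congr_deriv (by simp)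
    have heq : (fun h : ℝ => i (t + h) (𝔞 + h)) =ᶠ[nhds 0]
        (fun h : ℝ => (survival f (𝔞 + h) / survival f (𝔞 - t)) •
          (v ᵥ* NormedSpace.exp ((t + h) • Q))) := by
      filter_upwards [Metric.ball_mem_nhds (0:ℝ) ht] with h hh
      rw [Real.ball_eq_Ioo] at hh
      have h1 : 0 ≤ t + h := by simp at hh; linarith [hh.1]
      have h2 : t + h ≤ 𝔞 + h := by linarith
      rw [hi_le (t + h) (𝔞 + h) h1 h2]
      have : 𝔞 + h - (t + h) = 𝔞 - t := by ring
      rw [this]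
    refine HasDerivAt.congr_of_eventuallyEq ?_ heq
    refine hkey.congr_deriv ?_
    symm
    rw [hi_le t 𝔞 ht.le hlt.le, ← hv]
    rw [Matrix.smul_vecMul, Matrix.vecMul_vecMul]
    rw [smul_smul, add_comm]
    congr 2
    field_simp
  · -- 𝔞 < t
    set w := b (t - 𝔞) with hw
    have hkey : HasDerivAt
        (fun h : ℝ => survival f (𝔞 + h) • (w ᵥ* NormedSpace.exp ((𝔞 + h) • Q)))
        (survival f 𝔞 • (w ᵥ* (NormedSpace.exp (𝔞 • Q) * Q))
          + (-f 𝔞) • (w ᵥ* NormedSpace.exp (𝔞 • Q))) 0 := by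
      exact (hSa.smul (vecMul_exp_hasDerivAt L Q w 𝔞)).congr_deriv (by simp)
    have heq : (fun h : ℝ => i (t + h) (𝔞 + h)) =ᶠ[nhds 0]
        (fun h : ℝ => survival f (𝔞 + h) • (w ᵥ* NormedSpace.exp ((𝔞 + h) • Q))) := by
      filter_upwards [Metric.ball_mem_nhds (0:ℝ) h𝔞] with h hh
      rw [Real.ball_eq_Ioo] at hh
      have h1 : 0 ≤ 𝔞 + h := by simp at hh; linarith [hh.1]
      have h2 : 𝔞 + h < t + h := by linarith
      rw [hi_gt (t + h) (𝔞 + h) h1 h2]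
      have : t + h - (𝔞 + h) = t - 𝔞 := by ring
      rw [this]
    refine HasDerivAt.congr_of_eventuallyEq ?_ heq
    refine hkey.congr_deriv ?_
    symm
    rw [hi_gt t 𝔞 h𝔞.le hgt, ← hw]
    rw [Matrix.smul_vecMul, Matrix.vecMul_vecMul]
    rw [smul_smul, add_comm]
    congr 2
    field_simp
end

section
/- Let L ≥ 1 be a natural number and Q an L×L generator matrix with p(u) := exp(uQ). Let f : [0,∞) → [0,∞) be a continuous probability density with F(x) := ∫₀ˣ f(u)du and F^c := 1−F satisfying F^c(x) > 0 for all x ≥ 0. Let Ῡ : [0,∞) → ℝ^L and ī₀ : [0,∞) → ℝ^L be continuous (row-vector valued), and suppose Ī : [0,∞)×[0,∞) → ℝ^L is continuous and satisfies, for all t, 𝔞 ≥ 0: Ī(t,𝔞) = ∫₀^{(𝔞−t)⁺} ī₀(y)dy − ∫₀^{(𝔞−t)⁺} ∫₀ᵗ (f(u+y)/F^c(y))·ī₀(y)·exp(uQ) du dy + ∫_{(t−𝔞)⁺}^{t} Ῡ(s)ds − ∫_{(t−𝔞)⁺}^{t} ∫₀^{t−s} f(u)·Ῡ(s)·exp(uQ)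 du ds + ∫_{(t−𝔞)⁺}^{t} Ī(s, 𝔞−(t−s))·Q ds. Then for every (t,𝔞) with t > 0 and 𝔞 > 0, the directional derivative of Ī at (t,𝔞) in the direction (1,1) exists and equals −∫₀^{(𝔞−t)⁺} (f(t+y)/F^c(y))·ī₀(y)·exp(tQ) dy + Ῡ(t) − ∫_{(t−𝔞)⁺}^{t} f(t−s)·Ῡ(s)·exp((t−s)Q) ds + Ī(t,𝔞)·Q. -/
open Matrix intervalIntegral Set MeasureTheory

section AuxLemmas

variable {L : ℕ}

theorem exp_smul_continuous (Q : Matrix (Fin L) (Fin L) ℝ) :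
    Continuous fun u : ℝ => NormedSpace.exp (u • Q) := by
  letI : SeminormedRing (Matrix (Fin L) (Fin L) ℝ) := Matrix.linftyOpSemiNormedRing
  letI : NormedRing (Matrix (Fin L) (Fin L) ℝ) := Matrix.linftyOpNormedRing
  letI : NormedAlgebra ℝ (Matrix (Fin L) (Fin L) ℝ) := Matrix.linftyOpNormedAlgebra
  letI : NormedAlgebra ℚ (Matrix (Fin L) (Fin L) ℝ) := NormedAlgebra.restrictScalars ℚ ℝ _
  exact NormedSpace.exp_continuous.comp (continuous_id.smul continuous_const)

theorem vecMul_continuous' :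
    Continuous fun p : (Fin L → ℝ) × Matrix (Fin L) (Fin L) ℝ => p.1 ᵥ* p.2 := by
  apply continuous_pi
  intro j
  simp only [Matrix.vecMul, dotProduct]
  exact continuous_finset_sum _ fun i _ =>
    ((continuous_apply i).comp continuous_fst).mul
      ((continuous_apply j).comp ((continuous_apply i).comp continuous_snd))

theorem survival_continuous {f : ℝ → ℝ} (hf : Continuous f) : Continuous (survival f) := by
  unfold survival
  exact continuous_const.sub
    (intervalIntegral.continuous_primitive (fun a b => hf.intervalIntegrable a b) 0)

/-- auxiliary integrand for the initial-content term -/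
noncomputable def kAux (Q : Matrix (Fin L) (Fin L) ℝ) (f : ℝ → ℝ) (i₀ : ℝ → Fin L → ℝ)
    (u y : ℝ) : Fin L → ℝ :=
  (f (u + max y 0) / survival f (max y 0)) • ((i₀ (max y 0)) ᵥ* NormedSpace.exp (u • Q))

/-- auxiliary integrand for the arrival term -/
noncomputable def φAux (Q : Matrix (Fin L) (Fin L) ℝ) (f : ℝ → ℝ) (Υ : ℝ → Fin L → ℝ)
    (u s : ℝ) : Fin L → ℝ :=
  f u • ((Υ (max s 0)) ᵥ* NormedSpace.exp (u • Q))

/-- auxiliary integrand for the `Ī·Q` term -/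
noncomputable def wAux (Q : Matrix (Fin L) (Fin L) ℝ) (I : ℝ → ℝ → Fin L → ℝ)
    (c s : ℝ) : Fin L → ℝ :=
  (I (max s 0) (max (c + s) 0)) ᵥ* Q

theorem kAux_continuous (Q : Matrix (Fin L) (Fin L) ℝ) {f : ℝ → ℝ} {i₀ : ℝ → Fin L → ℝ}
    (hf : Continuous f) (hi₀ : ContinuousOn i₀ (Ici 0))
    (hFc_pos : ∀ x ≥ (0:ℝ), 0 < survival f x) :
    Continuous (Function.uncurry (kAux Q f i₀)) := by
  have hmax : Continuous fun y : ℝ => max y 0 := continuous_id.max continuous_const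
  have hi' : Continuous fun y : ℝ => i₀ (max y 0) :=
    hi₀.comp_continuous hmax fun y => mem_Ici.mpr (le_max_right _ _)
  have : Function.uncurry (kAux Q f i₀) = fun p : ℝ × ℝ =>
      (f (p.1 + max p.2 0) / survival f (max p.2 0)) •
        ((i₀ (max p.2 0)) ᵥ* NormedSpace.exp (p.1 • Q)) := rfl
  rw [this]
  apply Continuous.fun_smul
  · apply Continuous.div
    · exact hf.comp (continuous_fst.add (hmax.comp continuous_snd))
    · exact (survival_continuous hf).comp (hmax.comp continuous_snd)
    · intro p
      exact (hFc_pos _ (le_max_right _ _)).ne'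
  · exact vecMul_continuous'.comp ((hi'.comp continuous_snd).prodMk
      ((exp_smul_continuous Q).comp continuous_fst))

theorem φAux_continuous (Q : Matrix (Fin L) (Fin L) ℝ) {f : ℝ → ℝ} {Υ : ℝ → Fin L → ℝ}
    (hf : Continuous f) (hΥ : ContinuousOn Υ (Ici 0)) :
    Continuous (Function.uncurry (φAux Q f Υ)) := by
  have hmax : Continuous fun y : ℝ => max y 0 := continuous_id.max continuous_const
  have hΥ' : Continuous fun s : ℝ => Υ (max s 0) :=
    hΥ.comp_continuous hmax fun s => mem_Ici.mpr (le_max_right _ _)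
  have : Function.uncurry (φAux Q f Υ) = fun p : ℝ × ℝ =>
      f p.1 • ((Υ (max p.2 0)) ᵥ* NormedSpace.exp (p.1 • Q)) := rfl
  rw [this]
  exact (hf.comp continuous_fst).smul
    (vecMul_continuous'.comp ((hΥ'.comp continuous_snd).prodMk
      ((exp_smul_continuous Q).comp continuous_fst)))

theorem wAux_continuous (Q : Matrix (Fin L) (Fin L) ℝ) {I : ℝ → ℝ → Fin L → ℝ} (c : ℝ)
    (hI : ContinuousOn (fun p : ℝ × ℝ => I p.1 p.2) (Ici 0 ×ˢ Ici 0)) :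
    Continuous (wAux Q I c) := by
  have hI' : Continuous fun p : ℝ × ℝ => I (max p.1 0) (max p.2 0) :=
    hI.comp_continuous
      ((continuous_fst.max continuous_const).prodMk (continuous_snd.max continuous_const))
      fun p => mk_mem_prod (mem_Ici.mpr (le_max_right _ _)) (mem_Ici.mpr (le_max_right _ _))
  have : wAux Q I c = fun s : ℝ =>
      (fun p : (Fin L → ℝ) × Matrix (Fin L) (Fin L) ℝ => p.1 ᵥ* p.2)
        (I (max s 0) (max (c + s) 0), Q) := rfl
  rw [this]
  exact vecMul_continuous'.comp
    ((hI'.comp (continuous_id.prodMk (continuous_const.add continuous_id))).prodMk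
      continuous_const)

/-- Continuity of `s ↦ ∫ u in 0..(e s), g u s`. -/
theorem cont_inner_integral {E : Type*} [NormedAddCommGroup E] [NormedSpace ℝ E]
    (g : ℝ → ℝ → E) (hg : Continuous (Function.uncurry g))
    (e : ℝ → ℝ) (he : Continuous e) :
    Continuous fun s : ℝ => ∫ u in (0:ℝ)..(e s), g u s :=
  intervalIntegral.continuous_parametric_intervalIntegral_of_continuous
    (μ := MeasureTheory.volume) (f := fun s u => g u s) (a₀ := 0)
    (hg.comp continuous_swap) he

/-- Differentiation of `h ↦ ∫ s in l₀..l₁, ∫ u in 0..(t + h - c s), g u s` at `h = 0`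
(differentiation under the integral sign plus FTC in the inner integral). -/
theorem hasDerivAt_double {E : Type*} [NormedAddCommGroup E] [NormedSpace ℝ E] [CompleteSpace E]
    (g : ℝ → ℝ → E) (hg : Continuous (Function.uncurry g))
    (l₀ l₁ t : ℝ) (c : ℝ → ℝ) (hc : Continuous c) :
    HasDerivAt (fun h : ℝ => ∫ s in l₀..l₁, ∫ u in (0:ℝ)..(t + h - c s), g u s)
      (∫ s in l₀..l₁, g (t - c s) s) 0 := by
  have hΦ : Continuous fun p : ℝ × ℝ => g (t + p.1 - c p.2) p.2 :=
    hg.comp (((continuous_const.add continuous_fst).sub (hc.comp continuous_snd)).prodMk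
      continuous_snd)
  obtain ⟨M, hM⟩ :=
    ((isCompact_Icc : IsCompact (Icc (-1:ℝ) 1)).prod
      (isCompact_uIcc : IsCompact (uIcc l₀ l₁))).exists_bound_of_continuousOn
      hΦ.continuousOn
  have key := intervalIntegral.hasDerivAt_integral_of_dominated_loc_of_deriv_le
      (μ := MeasureTheory.volume)
      (F := fun (x : ℝ) (s : ℝ) => ∫ u in (0:ℝ)..(t + x - c s), g u s)
      (F' := fun (x : ℝ) (s : ℝ) => g (t + x - c s) s) (bound := fun _ => M)
      (a := l₀) (b := l₁) (x₀ := (0:ℝ)) (Metric.ball_mem_nhds (0:ℝ) one_pos) ?_ ?_ ?_ ?_ ?_ ?_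
  · simpa using key.2
  · apply Filter.Eventually.of_forall
    intro x
    exact (cont_inner_integral g hg (fun s => t + x - c s)
      (continuous_const.sub hc)).aestronglyMeasurable
  · exact (cont_inner_integral g hg (fun s => t + 0 - c s)
      (continuous_const.sub hc)).intervalIntegrable l₀ l₁
  · exact (hg.comp ((continuous_const.sub hc).prodMk continuous_id)).aestronglyMeasurable
  · apply ae_of_all
    intro s hs x hx
    have hx' : x ∈ Icc (-1:ℝ) 1 := by
      rw [mem_ball_zero_iff, Real.norm_eq_abs, abs_lt] at hx
      exact ⟨hx.1.le, hx.2.le⟩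
    exact hM (x, s) ⟨hx', uIoc_subset_uIcc hs⟩
  · exact intervalIntegrable_const
  · apply ae_of_all
    intro s hs x hx
    have h1 : HasStrictDerivAt (fun T : ℝ => ∫ u in (0:ℝ)..T, g u s)
        (g (t + x - c s) s) (t + x - c s) :=
      Continuous.integral_hasStrictDerivAt
        (hg.comp (continuous_id.prodMk continuous_const)) 0 _
    have h2 : HasDerivAt (fun x : ℝ => t + x - c s) 1 x := by
      simpa using ((hasDerivAt_id x).const_add t).sub_const (c s)
    have h3 := HasDerivAt.scomp x h1.hasDerivAt h2
    simpa [Function.comp_def] using h3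

/-- FTC with a shifted endpoint. -/
theorem hasDerivAt_endpoint {E : Type*} [NormedAddCommGroup E] [NormedSpace ℝ E]
    [CompleteSpace E] (g : ℝ → E) (hg : Continuous g) (l t : ℝ) :
    HasDerivAt (fun h : ℝ => ∫ s in l..(t + h), g s) (g t) 0 := by
  have h1 := (hg.integral_hasStrictDerivAt l t).hasDerivAt
  have h2 : HasDerivAt (fun h : ℝ => t + h) 1 0 := by
    simpa using (hasDerivAt_id (0:ℝ)).const_add t
  have h3 := HasDerivAt.scomp_of_eq 0 h1 h2 (by simp)
  simpa [Function.comp_def] using h3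

end AuxLemmas

/-- **Equation (3.11)** in the derivation of the PDE model in Theorem 3.1: the FLLN
limit `Ī(t,𝔞)` satisfies a first-order transport equation along the direction `(1,1)`. -/
theorem limit_mfI_transport_equation
    (L : ℕ) (hL : 1 ≤ L) (Q : Matrix (Fin L) (Fin L) ℝ) (hQ : IsGeneratorMatrix Q)
    (f : ℝ → ℝ) (hf_cont : Continuous f) (hf_nonneg : ∀ x, 0 ≤ f x)
    (hf_prob : ∫ u in Ioi (0:ℝ), f u = 1)
    (hFc_pos : ∀ x ≥ (0:ℝ), 0 < survival f x)
    (Υ i₀ : ℝ → Fin L → ℝ)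
    (hΥ : ContinuousOn Υ (Ici 0)) (hi₀ : ContinuousOn i₀ (Ici 0))
    (I : ℝ → ℝ → Fin L → ℝ)
    (hI_cont : ContinuousOn (fun p : ℝ × ℝ => I p.1 p.2) (Ici 0 ×ˢ Ici 0))
    (heq : ∀ t ≥ (0:ℝ), ∀ 𝔞 ≥ (0:ℝ),
      I t 𝔞 = (∫ y in (0:ℝ)..(max (𝔞 - t) 0), i₀ y)
        - (∫ y in (0:ℝ)..(max (𝔞 - t) 0), ∫ u in (0:ℝ)..t,
            (f (u + y) / survival f y) • ((i₀ y) ᵥ* NormedSpace.exp (u • Q)))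
        + (∫ s in (max (t - 𝔞) 0)..t, Υ s)
        - (∫ s in (max (t - 𝔞) 0)..t, ∫ u in (0:ℝ)..(t - s),
            f u • ((Υ s) ᵥ* NormedSpace.exp (u • Q)))
        + ∫ s in (max (t - 𝔞) 0)..t, (I s (𝔞 - (t - s))) ᵥ* Q) :
    ∀ t > (0:ℝ), ∀ 𝔞 > (0:ℝ),
      HasDerivAt (fun h : ℝ => I (t + h) (𝔞 + h))
        (-(∫ y in (0:ℝ)..(max (𝔞 - t) 0),
            (f (t + y) / survival f y) • ((i₀ y) ᵥ* NormedSpace.exp (t • Q)))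
          + Υ t
          - (∫ s in (max (t - 𝔞) 0)..t,
              f (t - s) • ((Υ s) ᵥ* NormedSpace.exp ((t - s) • Q)))
          + (I t 𝔞) ᵥ* Q) 0 := by
  intro t ht 𝔞 h𝔞
  set a := max (𝔞 - t) 0 with ha_def
  set b := max (t - 𝔞) 0 with hb_def
  have ha0 : 0 ≤ a := by rw [ha_def]; exact le_max_right _ _
  have hb0 : 0 ≤ b := by rw [hb_def]; exact le_max_right _ _
  have hbt : b < t := by rw [hb_def]; exact max_lt (by linarith) ht
  have hbta : t - 𝔞 ≤ b := by rw [hb_def]; exact le_max_left _ _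
  set ε := min t 𝔞 with hε_def
  have hε : 0 < ε := lt_min ht h𝔞
  have hεt : ε ≤ t := min_le_left _ _
  have hεa : ε ≤ 𝔞 := min_le_right _ _
  -- continuity facts
  have hΥ' : Continuous fun s : ℝ => Υ (max s 0) :=
    hΥ.comp_continuous (continuous_id.max continuous_const) fun s => mem_Ici.mpr (le_max_right _ _)
  have hkc : Continuous (Function.uncurry (kAux Q f i₀)) :=
    kAux_continuous Q hf_cont hi₀ hFc_pos
  have hφc : Continuous (Function.uncurry (φAux Q f Υ)) := φAux_continuous Q hf_cont hΥ
  have hwc : Continuous (wAux Q I (𝔞 - t)) := wAux_continuous Q (𝔞 - t) hI_cont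
  -- derivative of each piece
  have hA : HasDerivAt (fun _ : ℝ => ∫ y in (0:ℝ)..a, i₀ y) 0 0 := hasDerivAt_const _ _
  have hB : HasDerivAt
      (fun h : ℝ => ∫ y in (0:ℝ)..a, ∫ u in (0:ℝ)..(t + h), kAux Q f i₀ u y)
      (∫ y in (0:ℝ)..a, kAux Q f i₀ t y) 0 := by
    simpa using hasDerivAt_double (kAux Q f i₀) hkc 0 a t (fun _ => 0) continuous_const
  have hC : HasDerivAt (fun h : ℝ => ∫ s in b..(t + h), Υ (max s 0)) (Υ (max t 0)) 0 :=
    hasDerivAt_endpoint _ hΥ' b t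
  have hP : HasDerivAt
      (fun h : ℝ => ∫ s in b..t, ∫ u in (0:ℝ)..(t + h - s), φAux Q f Υ u s)
      (∫ s in b..t, φAux Q f Υ (t - s) s) 0 := by
    simpa using hasDerivAt_double (φAux Q f Υ) hφc b t t (fun s => s) continuous_id
  have hE : HasDerivAt (fun h : ℝ => ∫ s in b..(t + h), wAux Q I (𝔞 - t) s)
      (wAux Q I (𝔞 - t) t) 0 :=
    hasDerivAt_endpoint _ hwc b t
  -- the remainder term
  obtain ⟨M, hM⟩ :=
    ((isCompact_Icc : IsCompact (Icc (-ε) ε)).prod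
      (isCompact_Icc : IsCompact (Icc (t - ε) (t + ε)))).exists_bound_of_continuousOn
      hφc.continuousOn
  have hMmem : ((0:ℝ), t) ∈ Icc (-ε) ε ×ˢ Icc (t - ε) (t + ε) := by
    refine ⟨⟨?_, ?_⟩, ?_, ?_⟩ <;> simp <;> linarith
  have hM0 : 0 ≤ M := le_trans (norm_nonneg _) (hM (0, t) hMmem)
  have hRb : ∀ h : ℝ, |h| < ε →
      ‖∫ s in t..(t + h), ∫ u in (0:ℝ)..(t + h - s), φAux Q f Υ u s‖ ≤ M * |h| * |h| := by
    intro h hh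
    have houter : ∀ s ∈ Set.uIoc t (t + h),
        ‖∫ u in (0:ℝ)..(t + h - s), φAux Q f Υ u s‖ ≤ M * |h| := by
      intro s hs
      have key : |t + h - s| ≤ |h| ∧ t - ε ≤ s ∧ s ≤ t + ε := by
        rcases le_total 0 h with h0 | h0
        · rw [Set.uIoc_of_le (by linarith : t ≤ t + h)] at hs
          have h1 := hs.1; have h2 := hs.2
          have hhε : h < ε := by rw [abs_of_nonneg h0] at hh; exact hh
          refine ⟨?_, by linarith, by linarith⟩
          rw [abs_of_nonneg (by linarith), abs_of_nonneg h0]; linarith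
        · rw [Set.uIoc_of_ge (by linarith : t + h ≤ t)] at hs
          have h1 := hs.1; have h2 := hs.2
          have hhε : -h < ε := by rw [abs_of_nonpos h0] at hh; exact hh
          refine ⟨?_, by linarith, by linarith⟩
          rw [abs_of_nonpos (by linarith), abs_of_nonpos h0]; linarith
      have hinner : ∀ u ∈ Set.uIoc (0:ℝ) (t + h - s), ‖φAux Q f Υ u s‖ ≤ M := by
        intro u hu
        have hu1 : -|t + h - s| ≤ u :=
          le_trans (le_min (by linarith [abs_nonneg (t + h - s)]) (neg_abs_le _)) hu.1.le
        have hu2 : u ≤ |t + h - s| := le_trans hu.2 (max_le (abs_nonneg _) (le_abs_self _))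
        have hhε : |h| ≤ ε := hh.le
        exact hM (u, s) ⟨⟨by linarith [key.1], by linarith [key.1]⟩, ⟨key.2.1, key.2.2⟩⟩
      calc ‖∫ u in (0:ℝ)..(t + h - s), φAux Q f Υ u s‖
          ≤ M * |t + h - s - 0| := intervalIntegral.norm_integral_le_of_norm_le_const hinner
        _ ≤ M * |h| := by
            rw [sub_zero]; exact mul_le_mul_of_nonneg_left key.1 hM0
    calc ‖∫ s in t..(t + h), ∫ u in (0:ℝ)..(t + h - s), φAux Q f Υ u s‖
        ≤ M * |h| * |t + h - t| := intervalIntegral.norm_integral_le_of_norm_le_const houter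
      _ = M * |h| * |h| := by rw [add_sub_cancel_left]
  have hR : HasDerivAt
      (fun h : ℝ => ∫ s in t..(t + h), ∫ u in (0:ℝ)..(t + h - s), φAux Q f Υ u s) 0 0 := by
    rw [hasDerivAt_iff_isLittleO]
    simp only [sub_zero, smul_zero, add_zero, intervalIntegral.integral_same]
    rw [Asymptotics.isLittleO_iff]
    intro c hc
    have hδ : 0 < min ε (c / (M + 1)) := lt_min hε (by positivity)
    filter_upwards [Metric.ball_mem_nhds (0 : ℝ) hδ] with h hh
    rw [mem_ball_zero_iff, Real.norm_eq_abs] at hh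
    have hh1 : |h| < ε := lt_of_lt_of_le hh (min_le_left _ _)
    have hh2 : |h| < c / (M + 1) := lt_of_lt_of_le hh (min_le_right _ _)
    have hb2 := hRb h hh1
    have hMc : M * |h| ≤ c := by
      have h3 : |h| * (M + 1) < c := (lt_div_iff₀ (by linarith)).mp hh2
      nlinarith [abs_nonneg h]
    calc ‖∫ s in t..(t + h), ∫ u in (0:ℝ)..(t + h - s), φAux Q f Υ u s‖
        ≤ M * |h| * |h| := hb2
      _ ≤ c * |h| := by nlinarith [abs_nonneg h]
      _ = c * ‖h‖ := by rw [Real.norm_eq_abs]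
  -- eventual equality with the integral equation
  have heqv : (fun h : ℝ => I (t + h) (𝔞 + h)) =ᶠ[nhds (0:ℝ)]
      (fun h : ℝ =>
        (∫ y in (0:ℝ)..a, i₀ y)
        - (∫ y in (0:ℝ)..a, ∫ u in (0:ℝ)..(t + h), kAux Q f i₀ u y)
        + (∫ s in b..(t + h), Υ (max s 0))
        - ((∫ s in b..t, ∫ u in (0:ℝ)..(t + h - s), φAux Q f Υ u s)
            + (∫ s in t..(t + h), ∫ u in (0:ℝ)..(t + h - s), φAux Q f Υ u s))
        + (∫ s in b..(t + h), wAux Q I (𝔞 - t) s)) := by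
    filter_upwards [Metric.ball_mem_nhds (0 : ℝ) hε] with h hh
    rw [mem_ball_zero_iff, Real.norm_eq_abs, abs_lt] at hh
    have hht : -t < h := by linarith [hh.1]
    have hha : -𝔞 < h := by linarith [hh.1]
    have hth : (0:ℝ) ≤ t + h := by linarith
    have h𝔞h : (0:ℝ) ≤ 𝔞 + h := by linarith
    have hbth : b ≤ t + h := by
      rw [hb_def]; exact max_le (by linarith) (by linarith)
    rw [heq (t + h) hth (𝔞 + h) h𝔞h]
    have e1 : 𝔞 + h - (t + h) = 𝔞 - t := by ring
    have e2 : t + h - (𝔞 + h) = t - 𝔞 := by ring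
    rw [e1, e2, ← ha_def, ← hb_def]
    have eB : (∫ y in (0:ℝ)..a, ∫ u in (0:ℝ)..(t + h),
        (f (u + y) / survival f y) • ((i₀ y) ᵥ* NormedSpace.exp (u • Q)))
        = ∫ y in (0:ℝ)..a, ∫ u in (0:ℝ)..(t + h), kAux Q f i₀ u y := by
      apply intervalIntegral.integral_congr
      intro y hy
      rw [Set.uIcc_of_le ha0] at hy
      have hy0 : max y 0 = y := max_eq_left hy.1
      simp only [kAux, hy0]
    have eC : (∫ s in b..(t + h), Υ s) = ∫ s in b..(t + h), Υ (max s 0) := by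
      apply intervalIntegral.integral_congr
      intro s hs
      rw [Set.uIcc_of_le hbth] at hs
      show Υ s = Υ (max s 0)
      rw [max_eq_left (le_trans hb0 hs.1)]
    have hcont : Continuous fun s : ℝ => ∫ u in (0:ℝ)..(t + h - s), φAux Q f Υ u s :=
      cont_inner_integral _ hφc (fun s => t + h - s) (continuous_const.sub continuous_id)
    have eD : (∫ s in b..(t + h), ∫ u in (0:ℝ)..(t + h - s),
        f u • ((Υ s) ᵥ* NormedSpace.exp (u • Q)))
        = (∫ s in b..t, ∫ u in (0:ℝ)..(t + h - s), φAux Q f Υ u s)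
          + ∫ s in t..(t + h), ∫ u in (0:ℝ)..(t + h - s), φAux Q f Υ u s := by
      rw [show (∫ s in b..(t + h), ∫ u in (0:ℝ)..(t + h - s),
          f u • ((Υ s) ᵥ* NormedSpace.exp (u • Q)))
          = ∫ s in b..(t + h), ∫ u in (0:ℝ)..(t + h - s), φAux Q f Υ u s from ?_]
      · exact (intervalIntegral.integral_add_adjacent_intervals
          (hcont.intervalIntegrable b t) (hcont.intervalIntegrable t (t + h))).symm
      · apply intervalIntegral.integral_congr
        intro s hs
        rw [Set.uIcc_of_le hbth] at hs
        have hs0 : max s 0 = s := max_eq_left (le_trans hb0 hs.1)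
        simp only [φAux, hs0]
    have eE : (∫ s in b..(t + h), (I s (𝔞 + h - (t + h - s))) ᵥ* Q)
        = ∫ s in b..(t + h), wAux Q I (𝔞 - t) s := by
      apply intervalIntegral.integral_congr
      intro s hs
      rw [Set.uIcc_of_le hbth] at hs
      have hs0 : (0:ℝ) ≤ s := le_trans hb0 hs.1
      have hs1 : (0:ℝ) ≤ 𝔞 - t + s := by linarith [le_trans hbta hs.1]
      show (I s (𝔞 + h - (t + h - s))) ᵥ* Q = wAux Q I (𝔞 - t) s
      rw [show 𝔞 + h - (t + h - s) = 𝔞 - t + s from by ring]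
      simp only [wAux, max_eq_left hs0, max_eq_left hs1]
    rw [eB, eC, eD, eE]
  -- assemble
  refine HasDerivAt.congr_of_eventuallyEq ?_ heqv
  have hG := ((((hA.sub hB).add hC).sub (hP.add hR)).add hE)
  rw [zero_sub, add_zero] at hG
  have v1 : (∫ y in (0:ℝ)..a, kAux Q f i₀ t y)
      = ∫ y in (0:ℝ)..a, (f (t + y) / survival f y) •
          ((i₀ y) ᵥ* NormedSpace.exp (t • Q)) := by
    apply intervalIntegral.integral_congr
    intro y hy
    rw [Set.uIcc_of_le ha0] at hy
    have hy0 : max y 0 = y := max_eq_left hy.1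
    simp only [kAux, hy0]
  have v2 : Υ (max t 0) = Υ t := by rw [max_eq_left ht.le]
  have v3 : (∫ s in b..t, φAux Q f Υ (t - s) s)
      = ∫ s in b..t, f (t - s) • ((Υ s) ᵥ* NormedSpace.exp ((t - s) • Q)) := by
    apply intervalIntegral.integral_congr
    intro s hs
    rw [Set.uIcc_of_le hbt.le] at hs
    simp only [φAux, max_eq_left (le_trans hb0 hs.1)]
  have v4 : wAux Q I (𝔞 - t) t = (I t 𝔞) ᵥ* Q := by
    simp only [wAux]
    rw [max_eq_left ht.le, show 𝔞 - t + t = 𝔞 from by ring, max_eq_left h𝔞.le]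
  rw [v1, v2, v3, v4] at hG
  exact hG
end
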